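/- Let Z be a compact metric space of covering dimension n with an action of a finite group F by isometries. Let Y ⊆ Z be an open locally connected F-invariant subset. Let U be a finite collection of open subsets of Z such that gU ∈ U for all g ∈ F, U ∈ U, and closure(U) ⊆ Y for all U ∈ U. Assume there is k such that for every subset U₀ ⊆ U with more than k elements the intersection of the boundaries ∂U over U ∈ U₀ is empty. Let δ > 0, and put m = (n+1)·|F| and l = k·|F|. Then there are finite collections V^0, …, V^m of open subsets of Z such that: (1) V := V^0 ∪ … ∪ V^m is an open cover of Z; (2) diam(V) < δ for every V ∈ V; (3) for every V ∈ V there are at most l sets U ∈ U such that U and V intersect but U does not contain V; (4) for fixed j and V₀ ∈ V^j, V₀ ∩ V ≠ ∅ for at most 2^{j+1} − 2 sets V ∈ V^0 ∪ … ∪ V^j; (5) for fixed j and V₀, V₁ ∈ V^j, either V₀ = V₁ or closure(V₀) ∩ closure(V₁) = ∅; (6) each V^i is F-invariant: gV ∈ V^i for g ∈ F, V ∈ V^i; (7) V = interior(closure(V)) for every V ∈ V. -/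

import Mathlib

open Pointwise

def dimLE {X : Type*} (U : Set (Set X)) (N : ℕ) : Prop :=
  ∀ x : X, {V | V ∈ U ∧ x ∈ V}.Finite ∧ {V | V ∈ U ∧ x ∈ V}.ncard ≤ N + 1

def coveringDimLE (X : Type*) [TopologicalSpace X] (n : ℕ) : Prop :=
  ∀ U : Set (Set X), (∀ V ∈ U, IsOpen V) → ⋃₀ U = Set.univ →
    ∃ W : Set (Set X), (∀ V ∈ W, IsOpen V) ∧ ⋃₀ W = Set.univ ∧
      (∀ V ∈ W, ∃ V' ∈ U, V ⊆ V') ∧ dimLE W n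

theorem regular_open_idem {X : Type*} [TopologicalSpace X] (A : Set X) :
    interior (closure (interior (closure A))) = interior (closure A) := by
  apply le_antisymm
  · exact interior_mono (closure_minimal interior_subset isClosed_closure)
  · exact isOpen_interior.subset_interior_closure

theorem stepA (Z : Type*) [MetricSpace Z]
    (𝒰 : Set (Set Z)) (hUfin : 𝒰.Finite) (hUopen : ∀ U ∈ 𝒰, IsOpen U) :
    ∀ x : Z, ∃ ε > 0, ∀ U ∈ 𝒰,
      (x ∈ U → Metric.ball x ε ⊆ U) ∧ (x ∉ closure U → Metric.ball x ε ∩ U = ∅) := by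
  intro x
  revert hUopen
  refine Set.Finite.induction_on
    (motive := fun T _ => (∀ U ∈ T, IsOpen U) → ∃ ε > 0, ∀ U ∈ T,
      (x ∈ U → Metric.ball x ε ⊆ U) ∧ (x ∉ closure U → Metric.ball x ε ∩ U = ∅))
    𝒰 hUfin (fun _ => ⟨1, one_pos, by simp⟩) ?_
  intro a s hna hs ih hUopen
  obtain ⟨ε₁, hε₁, h₁⟩ := ih (fun U hU => hUopen U (Set.mem_insert_of_mem _ hU))
  have ha : IsOpen a := hUopen a (Set.mem_insert _ _)
  have h2 : ∃ ε₂ > 0, (x ∈ a → Metric.ball x ε₂ ⊆ a) ∧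
      (x ∉ closure a → Metric.ball x ε₂ ∩ a = ∅) := by
    by_cases hxa : x ∈ a
    · obtain ⟨ε₂, hε₂, hball⟩ := Metric.isOpen_iff.mp ha x hxa
      exact ⟨ε₂, hε₂, fun _ => hball, fun hc => absurd (subset_closure hxa) hc⟩
    · by_cases hxc : x ∈ closure a
      · exact ⟨1, one_pos, fun h => absurd h hxa, fun h => absurd hxc h⟩
      · obtain ⟨ε₂, hε₂, hball⟩ := Metric.isOpen_iff.mp isClosed_closure.isOpen_compl x hxc
        refine ⟨ε₂, hε₂, fun h => absurd h hxa, fun _ => ?_⟩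
        apply Set.eq_empty_of_forall_notMem
        rintro y ⟨hy1, hy2⟩
        exact hball hy1 (subset_closure hy2)
  obtain ⟨ε₂, hε₂, h2a, h2b⟩ := h2
  refine ⟨min ε₁ ε₂, lt_min hε₁ hε₂, ?_⟩
  rintro U (rfl | hU)
  · exact ⟨fun h => (Metric.ball_subset_ball (min_le_right _ _)).trans (h2a h),
      fun h => Set.eq_empty_of_subset_empty
        ((Set.inter_subset_inter_left _ (Metric.ball_subset_ball (min_le_right _ _))).trans
          (h2b h).subset)⟩
  · exact ⟨fun h => (Metric.ball_subset_ball (min_le_left _ _)).trans ((h₁ U hU).1 h),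
      fun h => Set.eq_empty_of_subset_empty
        ((Set.inter_subset_inter_left _ (Metric.ball_subset_ball (min_le_left _ _))).trans
          ((h₁ U hU).2 h).subset)⟩

/-- Proposition 3.3: existence of a fine open cover `𝒱 = 𝒱⁰ ∪ … ∪ 𝒱^m` of `Z`
compatible with a given collection `𝒰`. -/
theorem cover_compatible_with_collection
    (Z : Type*) [MetricSpace Z] [CompactSpace Z]
    (n : ℕ) (hdim : coveringDimLE Z n)
    (F : Type*) [Group F] [Finite F] [MulAction F Z]
    (hiso : ∀ g : F, Isometry (fun z : Z => g • z))
    (Y : Set Z) (hYopen : IsOpen Y) (hYlc : LocallyConnectedSpace ↥Y)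
    (hYinv : ∀ g : F, g • Y = Y)
    (𝒰 : Set (Set Z)) (hUfin : 𝒰.Finite) (hUopen : ∀ U ∈ 𝒰, IsOpen U)
    (hUinv : ∀ (g : F), ∀ U ∈ 𝒰, g • U ∈ 𝒰)
    (hUY : ∀ U ∈ 𝒰, closure U ⊆ Y)
    (k : ℕ) (hk : ∀ 𝒰₀ ⊆ 𝒰, k < 𝒰₀.ncard → (⋂ U ∈ 𝒰₀, frontier U) = ∅)
    (δ : ℝ) (hδ : 0 < δ) :
    ∃ 𝒱 : Fin ((n + 1) * Nat.card F + 1) → Set (Set Z),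
      (∀ j, (𝒱 j).Finite) ∧
      -- (1) 𝒱 = 𝒱⁰ ∪ … ∪ 𝒱^m is an open cover of Z
      (∀ j, ∀ V ∈ 𝒱 j, IsOpen V) ∧ (⋃ j, ⋃₀ 𝒱 j) = Set.univ ∧
      -- (2) diameters < δ
      (∀ j, ∀ V ∈ 𝒱 j, Metric.diam V < δ) ∧
      -- (3) each V meets-without-being-contained-in at most k·|F| members of 𝒰
      (∀ j, ∀ V ∈ 𝒱 j,
        {U | U ∈ 𝒰 ∧ (U ∩ V).Nonempty ∧ ¬ V ⊆ U}.ncard ≤ k * Nat.card F) ∧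
      -- (4) intersection bound within 𝒱⁰ ∪ … ∪ 𝒱^j
      (∀ j, ∀ V₀ ∈ 𝒱 j,
        {V | (∃ i, i ≤ j ∧ V ∈ 𝒱 i) ∧ (V₀ ∩ V).Nonempty}.ncard ≤ 2 ^ ((j : ℕ) + 1) - 2) ∧
      -- (5) members of a fixed 𝒱^j have disjoint closures or are equal
      (∀ j, ∀ V₀ ∈ 𝒱 j, ∀ V₁ ∈ 𝒱 j, V₀ = V₁ ∨ closure V₀ ∩ closure V₁ = ∅) ∧
      -- (6) F-invariance of each 𝒱^j
      (∀ j, ∀ (g : F), ∀ V ∈ 𝒱 j, g • V ∈ 𝒱 j) ∧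
      -- (7) regular open
      (∀ j, ∀ V ∈ 𝒱 j, V = interior (closure V)) := by
  classical
  have _inst : Fintype F := Fintype.ofFinite F
  set m : ℕ := (n + 1) * Nat.card F with hm
  have hFpos : 0 < Nat.card F := Nat.card_pos
  have hmpos : 1 ≤ m := Nat.one_le_iff_ne_zero.mpr (by positivity)
  have hbounded : ∀ s : Set Z, Bornology.IsBounded s := fun s =>
    (isCompact_univ.isBounded).subset (Set.subset_univ s)
  -- Step A : radii ε x adapted to 𝒰
  choose ε hε0 hεU using stepA Z 𝒰 hUfin hUopen
  have hfrontier : ∀ x : Z, {U | U ∈ 𝒰 ∧ x ∈ frontier U}.ncard ≤ k := by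
    intro x
    by_contra h
    push_neg at h
    have h0 := hk _ (fun U hU => hU.1) h
    have hxmem : x ∈ ⋂ U ∈ {U | U ∈ 𝒰 ∧ x ∈ frontier U}, frontier U :=
      Set.mem_iInter₂.mpr fun U hU => hU.2
    rw [h0] at hxmem
    exact hxmem
  have hgood : ∀ (x₀ : Z) (A : Set Z), A ⊆ Metric.ball x₀ (ε x₀) →
      {U | U ∈ 𝒰 ∧ (U ∩ A).Nonempty ∧ ¬ A ⊆ U}.ncard ≤ k := by
    intro x₀ A hA
    refine le_trans (Set.ncard_le_ncard ?_ (hUfin.subset (fun U hU => hU.1))) (hfrontier x₀)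
    rintro U ⟨hU, ⟨y, yU, yA⟩, hns⟩
    refine ⟨hU, ?_⟩
    rw [(hUopen U hU).frontier_eq]
    constructor
    · by_contra hc
      exact Set.eq_empty_iff_forall_notMem.mp ((hεU x₀ U hU).2 hc) y ⟨hA yA, yU⟩
    · intro hmem
      exact hns (hA.trans ((hεU x₀ U hU).1 hmem))
  -- Step B : finite set of good centers and the scale ρ
  obtain ⟨t, ht⟩ : ∃ t : Finset Z, (Set.univ : Set Z) ⊆ ⋃ x ∈ t, Metric.ball x (ε x / 2) :=
    isCompact_univ.elim_finite_subcover (fun x : Z => Metric.ball x (ε x / 2))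
      (fun x => Metric.isOpen_ball)
      (fun z _ => Set.mem_iUnion.mpr ⟨z, Metric.mem_ball_self (by have := hε0 z; positivity)⟩)
  set ρ : ℝ := (insert (δ / 2) (t.image ε)).min' (Finset.insert_nonempty _ _) with hρdef
  have hρpos : 0 < ρ := by
    apply (Finset.lt_min'_iff _ _).mpr
    intro b hb
    rcases Finset.mem_insert.mp hb with rfl | hb
    · linarith
    · obtain ⟨x, -, rfl⟩ := Finset.mem_image.mp hb
      exact hε0 x
  have hρδ : ρ ≤ δ / 2 := Finset.min'_le _ _ (Finset.mem_insert_self _ _)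
  have hρε : ∀ x ∈ t, ρ ≤ ε x := fun x hx =>
    Finset.min'_le _ _ (Finset.mem_insert_of_mem (Finset.mem_image_of_mem _ hx))
  -- Step C : a finite subordinate cover of order ≤ n+1 by small sets
  obtain ⟨𝒲₀f, h₀props, h₀cover, h₀dim⟩ :
      ∃ 𝒲₀f : Finset (Set Z),
        (∀ W ∈ 𝒲₀f, IsOpen W ∧ Metric.diam W ≤ ρ / 2) ∧
        ((Set.univ : Set Z) ⊆ ⋃ W ∈ 𝒲₀f, W) ∧
        (∀ x : Z, (𝒲₀f.filter (fun W => x ∈ W)).card ≤ n + 1) := by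
    have hρ4 : 0 < ρ / 4 := by positivity
    obtain ⟨Wr, hWopen, hWcover, hWref, hWdim⟩ :=
      hdim {B | ∃ y : Z, B = Metric.ball y (ρ / 4)}
        (by rintro B ⟨y, rfl⟩; exact Metric.isOpen_ball)
        (Set.eq_univ_iff_forall.mpr fun z =>
          ⟨Metric.ball z (ρ / 4), ⟨z, rfl⟩, Metric.mem_ball_self hρ4⟩)
    obtain ⟨tW, htW⟩ := isCompact_univ.elim_finite_subcover
      (fun w : Wr => (w : Set Z)) (fun w => hWopen w w.2)
      (by rw [← Set.sUnion_eq_iUnion, hWcover])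
    refine ⟨tW.image Subtype.val, ?_, ?_, ?_⟩
    · intro W hW
      obtain ⟨w, hw, rfl⟩ := Finset.mem_image.mp hW
      refine ⟨hWopen _ w.2, ?_⟩
      obtain ⟨B, ⟨y, rfl⟩, hsub⟩ := hWref _ w.2
      calc Metric.diam (w : Set Z) ≤ Metric.diam (Metric.ball y (ρ / 4)) :=
            Metric.diam_mono hsub (hbounded _)
        _ ≤ 2 * (ρ / 4) := Metric.diam_ball hρ4.le
        _ ≤ ρ / 2 := by linarith
    · intro z hz
      obtain ⟨w, hw, hzw⟩ := Set.mem_iUnion₂.mp (htW hz)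
      exact Set.mem_iUnion₂.mpr ⟨(w : Set Z), Finset.mem_image_of_mem _ hw, hzw⟩
    · intro x
      have hsub : ↑((tW.image Subtype.val).filter (fun W => x ∈ W)) ⊆
          {V | V ∈ Wr ∧ x ∈ V} := by
        intro W hW
        simp only [Finset.coe_filter, Set.mem_setOf_eq, Finset.mem_image] at hW
        obtain ⟨⟨w, hw, rfl⟩, hx⟩ := hW
        exact ⟨w.2, hx⟩
      have := Set.ncard_le_ncard hsub (hWdim x).1
      rw [Set.ncard_coe_finset] at this
      exact this.trans (hWdim x).2
  -- Step D : the saturated cover 𝒲f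
  set 𝒲f : Finset (Set Z) :=
    ((Finset.univ : Finset F) ×ˢ 𝒲₀f).image (fun p => p.1 • p.2) with h𝒲def
  have h𝒲₀sub : 𝒲₀f ⊆ 𝒲f := by
    intro W hW
    refine Finset.mem_image.mpr ⟨(1, W), ?_, one_smul _ _⟩
    simp [hW]
  have h𝒲mem : ∀ W ∈ 𝒲f, ∃ g : F, ∃ W₀ ∈ 𝒲₀f, W = g • W₀ := by
    intro W hW
    obtain ⟨⟨g, W₀⟩, hp, rfl⟩ := Finset.mem_image.mp hW
    exact ⟨g, W₀, (Finset.mem_product.mp hp).2, rfl⟩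
  have h𝒲inv : ∀ (g : F), ∀ W ∈ 𝒲f, g • W ∈ 𝒲f := by
    intro g W hW
    obtain ⟨g', W₀, hW₀, rfl⟩ := h𝒲mem W hW
    refine Finset.mem_image.mpr ⟨(g * g', W₀), ?_, (smul_smul g g' W₀).symm⟩
    simp [hW₀]
  have h𝒲open : ∀ W ∈ 𝒲f, IsOpen W := by
    intro W hW
    obtain ⟨g, W₀, hW₀, rfl⟩ := h𝒲mem W hW
    have : g • W₀ = (fun z : Z => g⁻¹ • z) ⁻¹' W₀ :=
      Set.ext fun x => Set.mem_smul_set_iff_inv_smul_mem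
    rw [this]
    exact (h₀props W₀ hW₀).1.preimage (hiso g⁻¹).continuous
  have h𝒲diam : ∀ W ∈ 𝒲f, Metric.diam W ≤ ρ / 2 := by
    intro W hW
    obtain ⟨g, W₀, hW₀, rfl⟩ := h𝒲mem W hW
    rw [← Set.image_smul, (hiso g).diam_image]
    exact (h₀props W₀ hW₀).2
  have h𝒲ord : ∀ x : Z, (𝒲f.filter (fun W => x ∈ W)).card ≤ m := by
    intro x
    have hsub : 𝒲f.filter (fun W => x ∈ W) ⊆
        Finset.univ.biUnion (fun g : F =>
          (𝒲₀f.filter (fun W => g⁻¹ • x ∈ W)).image (fun W => g • W)) := by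
      intro W hW
      obtain ⟨hWmem, hx⟩ := Finset.mem_filter.mp hW
      obtain ⟨g, W₀, hW₀, rfl⟩ := h𝒲mem W hWmem
      refine Finset.mem_biUnion.mpr ⟨g, Finset.mem_univ g, Finset.mem_image_of_mem _ ?_⟩
      exact Finset.mem_filter.mpr ⟨hW₀, Set.mem_smul_set_iff_inv_smul_mem.mp hx⟩
    calc (𝒲f.filter (fun W => x ∈ W)).card
        ≤ _ := Finset.card_le_card hsub
      _ ≤ ∑ g : F, ((𝒲₀f.filter (fun W => g⁻¹ • x ∈ W)).image (fun W => g • W)).card :=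
          Finset.card_biUnion_le
      _ ≤ ∑ g : F, (n + 1) := by
          apply Finset.sum_le_sum
          intro g _
          refine le_trans Finset.card_image_le ?_
          exact h₀dim (g⁻¹ • x)
      _ = Nat.card F * (n + 1) := by
          rw [Finset.sum_const, Finset.card_univ, Nat.card_eq_fintype_card, smul_eq_mul]
      _ = m := by rw [hm]; ring
  -- Step E : the functions f and the constant c
  set f : Set Z → Z → ℝ := fun W x => if W = Set.univ then 1 else Metric.infDist x Wᶜ
    with hfdef
  have hfcont : ∀ W, Continuous (f W) := by
    intro W
    by_cases hW : W = Set.univ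
    · simp only [hfdef, if_pos hW]; exact continuous_const
    · simp only [hfdef, if_neg hW]; exact Metric.continuous_infDist_pt _
  have hfpos : ∀ W x, 0 < f W x → x ∈ W := by
    intro W x h
    by_cases hW : W = Set.univ
    · rw [hW]; trivial
    · rw [hfdef] at h; simp only [if_neg hW] at h
      by_contra hx
      have hx' : x ∈ Wᶜ := hx
      rw [Metric.infDist_zero_of_mem hx'] at h
      exact lt_irrefl 0 h
  have hfeq' : ∀ (g : F) (W : Set Z) (x : Z), f (g • W) x = f W (g⁻¹ • x) := by
    have hfeq : ∀ (g : F) (W : Set Z) (x : Z), f (g • W) (g • x) = f W x := by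
      intro g W x
      by_cases hW : W = Set.univ
      · simp [hfdef, hW, Set.smul_set_univ]
      · have h2 : g • W ≠ Set.univ := by
          intro h
          apply hW
          have := congrArg (fun A => g⁻¹ • A) h
          simpa [inv_smul_smul, Set.smul_set_univ] using this
        rw [hfdef]
        simp only [if_neg hW, if_neg h2]
        rw [← Set.smul_set_compl, ← Set.image_smul, Metric.infDist_image (hiso g)]
    intro g W x
    conv_lhs => rw [← smul_inv_smul g x]
    exact hfeq g W (g⁻¹ • x)
  obtain ⟨c₀, hc₀pos, hc₀le, hc₀⟩ : ∃ c₀ : ℝ, 0 < c₀ ∧ c₀ ≤ 1 ∧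
      ∀ x : Z, ∃ W ∈ 𝒲₀f, c₀ ≤ f W x := by
    obtain ⟨r, hr, hler⟩ := lebesgue_number_lemma_of_metric (s := (Set.univ : Set Z))
      (c := fun w : {W // W ∈ 𝒲₀f} => (w : Set Z)) isCompact_univ
      (fun w => (h₀props w w.2).1)
      (by intro z hz
          obtain ⟨W, hW, hzW⟩ := Set.mem_iUnion₂.mp (h₀cover hz)
          exact Set.mem_iUnion.mpr ⟨⟨W, hW⟩, hzW⟩)
    refine ⟨min r 1, lt_min hr one_pos, min_le_right _ _, ?_⟩
    intro x
    obtain ⟨w, hw⟩ := hler x (Set.mem_univ x)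
    refine ⟨(w : Set Z), w.2, ?_⟩
    by_cases hWu : (w : Set Z) = Set.univ
    · rw [hfdef]; simp only [if_pos hWu]; exact min_le_right _ _
    · rw [hfdef]; simp only [if_neg hWu]
      refine le_trans (min_le_left _ _) ?_
      by_contra hlt
      push_neg at hlt
      obtain ⟨y, hy, hdy⟩ := (Metric.infDist_lt_iff (Set.nonempty_compl.mpr hWu)).mp hlt
      exact hy (hw (by rwa [Metric.mem_ball, dist_comm]))
  set c : ℝ := c₀ / 2 ^ (m + 1) with hcdef
  have hcpos : 0 < c := by positivity
  -- Step F : the sets V S and Ṽ S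
  set V : Finset (Set Z) → Set Z := fun S =>
    {x | (∀ W ∈ S, c < f W x) ∧ ∀ W ∈ S, ∀ W' ∈ 𝒲f \ S, 2 * f W' x < f W x} with hVdef
  have hVopen : ∀ S, IsOpen (V S) := by
    intro S
    have : V S = (⋂ W ∈ S, {x | c < f W x}) ∩
        (⋂ W ∈ S, ⋂ W' ∈ 𝒲f \ S, {x | 2 * f W' x < f W x}) := by
      ext x
      simp only [hVdef, Set.mem_setOf_eq, Set.mem_inter_iff, Set.mem_iInter]
    rw [this]
    refine IsOpen.inter ?_ ?_
    · exact isOpen_biInter_finset fun W _ => isOpen_lt continuous_const (hfcont W)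
    · exact isOpen_biInter_finset fun W _ => isOpen_biInter_finset fun W' _ =>
        isOpen_lt (continuous_const.mul (hfcont W')) (hfcont W)
  have hVsub : ∀ S, ∀ W ∈ S, V S ⊆ W := by
    intro S W hW x hx
    exact hfpos W x (lt_trans hcpos (hx.1 W hW))
  have hclV₁ : ∀ S, ∀ W ∈ S, closure (V S) ⊆ {x | c ≤ f W x} := by
    intro S W hW
    exact closure_minimal (fun x hx => le_of_lt (hx.1 W hW))
      (isClosed_le continuous_const (hfcont W))
  have hclV₂ : ∀ S, ∀ W ∈ S, ∀ W' ∈ 𝒲f \ S, closure (V S) ⊆ {x | 2 * f W' x ≤ f W x} := by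
    intro S W hW W' hW'
    exact closure_minimal (fun x hx => le_of_lt (hx.2 W hW W' hW'))
      (isClosed_le (continuous_const.mul (hfcont W')) (hfcont W))
  have hsubkey : ∀ S S' : Finset (Set Z), S ⊆ 𝒲f → S' ⊆ 𝒲f → S'.card ≤ S.card →
      (closure (V S) ∩ closure (V S')).Nonempty → S' ⊆ S := by
    intro S S' hS hS' hcard ⟨x, hxS, hxS'⟩
    intro W' hW'S'
    by_contra hW'S
    have hSS' : ¬ S ⊆ S' := by
      intro h
      rw [Finset.eq_of_subset_of_card_le h hcard] at hW'S
      exact hW'S hW'S'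
    obtain ⟨W, hWS, hWS'⟩ := Finset.not_subset.mp hSS'
    have h1 : 2 * f W' x ≤ f W x :=
      hclV₂ S W hWS W' (Finset.mem_sdiff.mpr ⟨hS' hW'S', hW'S⟩) hxS
    have h2 : 2 * f W x ≤ f W' x :=
      hclV₂ S' W' hW'S' W (Finset.mem_sdiff.mpr ⟨hS hWS, hWS'⟩) hxS'
    have h3 : c ≤ f W x := hclV₁ S W hWS hxS
    linarith
  -- equivariance of V
  have h𝒲img : ∀ g : F, 𝒲f.image (g • ·) = 𝒲f := by
    intro g
    apply Finset.eq_of_subset_of_card_le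
    · intro W hW
      obtain ⟨W₀, hW₀, rfl⟩ := Finset.mem_image.mp hW
      exact h𝒲inv g W₀ hW₀
    · rw [Finset.card_image_of_injective _ (MulAction.injective g)]
  have hgV : ∀ (g : F) (S : Finset (Set Z)), S ⊆ 𝒲f → g • V S = V (S.image (g • ·)) := by
    intro g S hS
    ext x
    rw [Set.mem_smul_set_iff_inv_smul_mem]
    simp only [hVdef, Set.mem_setOf_eq]
    constructor
    · rintro ⟨h1, h2⟩
      constructor
      · intro W hW
        obtain ⟨W₀, hW₀, rfl⟩ := Finset.mem_image.mp hW
        rw [hfeq' g W₀ x]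
        exact h1 W₀ hW₀
      · intro W hW W' hW'
        obtain ⟨W₀, hW₀, rfl⟩ := Finset.mem_image.mp hW
        have hW'mem : W' ∈ 𝒲f := (Finset.mem_sdiff.mp hW').1
        obtain ⟨W₀', hW₀'f, rfl⟩ := Finset.mem_image.mp ((h𝒲img g).symm ▸ hW'mem)
        have hW₀'S : W₀' ∉ S := by
          intro hmem
          exact (Finset.mem_sdiff.mp hW').2 (Finset.mem_image_of_mem _ hmem)
        rw [hfeq' g W₀ x, hfeq' g W₀' x]
        exact h2 W₀ hW₀ W₀' (Finset.mem_sdiff.mpr ⟨hW₀'f, hW₀'S⟩)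
    · rintro ⟨h1, h2⟩
      constructor
      · intro W hW
        rw [← hfeq' g W x]
        exact h1 (g • W) (Finset.mem_image_of_mem _ hW)
      · intro W hW W' hW'
        rw [← hfeq' g W x, ← hfeq' g W' x]
        refine h2 (g • W) (Finset.mem_image_of_mem _ hW) (g • W')
          (Finset.mem_sdiff.mpr ⟨h𝒲inv g W' (Finset.mem_sdiff.mp hW').1, ?_⟩)
        intro hmem
        obtain ⟨W'', hW'', heq⟩ := Finset.mem_image.mp hmem
        rw [MulAction.injective g heq] at hW''
        exact (Finset.mem_sdiff.mp hW').2 hW''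
  set Vt : Finset (Set Z) → Set Z := fun S => interior (closure (V S)) with hVtdef
  have hVVt : ∀ S, V S ⊆ Vt S := fun S => (hVopen S).subset_interior_closure
  have hVtcl : ∀ S, Vt S ⊆ closure (V S) := fun S => interior_subset
  have hVteq : ∀ (g : F) (S : Finset (Set Z)), S ⊆ 𝒲f →
      g • Vt S = Vt (S.image (g • ·)) := by
    intro g S hS
    let e : Homeomorph Z Z :=
      { toFun := (g • ·), invFun := (g⁻¹ • ·),
        left_inv := fun x => inv_smul_smul g x,
        right_inv := fun x => smul_inv_smul g x,
        continuous_toFun := (hiso g).continuous,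
        continuous_invFun := (hiso g⁻¹).continuous }
    have him : ∀ A : Set Z, g • A = e '' A := by
      intro A; rw [← Set.image_smul]; rfl
    rw [hVtdef]
    simp only
    rw [him, Homeomorph.image_interior, Homeomorph.image_closure, ← him, hgV g S hS]
  -- the levels
  set 𝒱 : Fin (m + 1) → Set (Set Z) := fun j =>
    ↑((𝒲f.powerset.filter (fun S => S.card = (j : ℕ) ∧ S.Nonempty)).image Vt) with h𝒱def
  have h𝒱mem : ∀ (j : Fin (m + 1)) (A : Set Z), A ∈ 𝒱 j ↔
      ∃ S : Finset (Set Z), S ⊆ 𝒲f ∧ S.card = (j : ℕ) ∧ S.Nonempty ∧ Vt S = A := by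
    intro j A
    constructor
    · intro hA
      obtain ⟨S, hS, rfl⟩ := Finset.mem_image.mp (Finset.mem_coe.mp hA)
      obtain ⟨h1, h2, h3⟩ := Finset.mem_filter.mp hS
      exact ⟨S, Finset.mem_powerset.mp h1, h2, h3, rfl⟩
    · rintro ⟨S, h1, h2, h3, rfl⟩
      exact Finset.mem_coe.mpr (Finset.mem_image_of_mem _
        (Finset.mem_filter.mpr ⟨Finset.mem_powerset.mpr h1, h2, h3⟩))
  -- the cover property
  have hcover : ∀ x : Z, ∃ S : Finset (Set Z),
      S ⊆ 𝒲f ∧ S.Nonempty ∧ S.card ≤ m ∧ x ∈ V S := by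
    intro x
    set A : ℕ → Finset (Set Z) :=
      fun j => 𝒲f.filter (fun W => c₀ / 2 ^ (j + 1) < f W x) with hAdef
    have hth : ∀ i j : ℕ, i ≤ j → A i ⊆ A j := by
      intro i j hij W hW
      obtain ⟨h1, h2⟩ := Finset.mem_filter.mp hW
      refine Finset.mem_filter.mpr ⟨h1, lt_of_le_of_lt ?_ h2⟩
      apply div_le_div_of_nonneg_left hc₀pos.le (by positivity)
      exact pow_le_pow_right₀ one_le_two (by omega)
    have hA0 : (A 0).Nonempty := by
      obtain ⟨W, hWmem, hWf⟩ := hc₀ x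
      refine ⟨W, Finset.mem_filter.mpr ⟨h𝒲₀sub hWmem, ?_⟩⟩
      have : c₀ / 2 ^ (0 + 1) < c₀ := by
        rw [pow_one]
        linarith
      linarith
    have hAm : (A m).card ≤ m := by
      refine le_trans (Finset.card_le_card ?_) (h𝒲ord x)
      intro W hW
      obtain ⟨h1, h2⟩ := Finset.mem_filter.mp hW
      exact Finset.mem_filter.mpr ⟨h1, hfpos W x (lt_trans (by positivity) h2)⟩
    have key : ∃ j < m, A (j + 1) ⊆ A j := by
      by_contra hcon
      push_neg at hcon
      have hstep : ∀ j < m, (A j).card < (A (j + 1)).card := by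
        intro j hj
        apply Finset.card_lt_card
        rw [Finset.ssubset_def]
        exact ⟨hth j (j + 1) (Nat.le_succ j), hcon j hj⟩
      have hind : ∀ j ≤ m, j + (A 0).card ≤ (A j).card := by
        intro j
        induction j with
        | zero => simp
        | succ i ih =>
          intro hi
          have h1 := ih (by omega)
          have h2 := hstep i (by omega)
          omega
      have h1 := hind m le_rfl
      have h2 := Finset.card_pos.mpr hA0
      omega
    obtain ⟨j, hjm, hsub2⟩ := key
    have hEq : A j = A (j + 1) := subset_antisymm (hth j (j + 1) (Nat.le_succ j)) hsub2
    refine ⟨A j, Finset.filter_subset _ _, hA0.mono (hth 0 j (Nat.zero_le j)), ?_, ?_, ?_⟩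
    · exact le_trans (Finset.card_le_card (hth j m hjm.le)) hAm
    · intro W hW
      have h2 := (Finset.mem_filter.mp hW).2
      refine lt_of_le_of_lt ?_ h2
      rw [hcdef]
      apply div_le_div_of_nonneg_left hc₀pos.le (by positivity)
      exact pow_le_pow_right₀ one_le_two (by omega)
    · intro W hW W' hW'
      have h2 := (Finset.mem_filter.mp hW).2
      obtain ⟨hW'f, hW'A⟩ := Finset.mem_sdiff.mp hW'
      rw [hEq] at hW'A
      have h3 : f W' x ≤ c₀ / 2 ^ (j + 2) := by
        by_contra hcc
        push_neg at hcc
        exact hW'A (Finset.mem_filter.mpr ⟨hW'f, hcc⟩)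
      have h4 : c₀ / 2 ^ (j + 1) = 2 * (c₀ / 2 ^ (j + 2)) := by
        rw [pow_succ]
        field_simp
        ring
      calc 2 * f W' x ≤ 2 * (c₀ / 2 ^ (j + 2)) := by linarith
        _ = c₀ / 2 ^ (j + 1) := h4.symm
        _ < f W x := h2
  -- small-diameter facts
  have hdiamV : ∀ (S : Finset (Set Z)), S ⊆ 𝒲f → S.Nonempty →
      Metric.diam (closure (V S)) ≤ ρ / 2 := by
    intro S hS ⟨W₀, hW₀⟩
    rw [Metric.diam_closure]
    exact le_trans (Metric.diam_mono (hVsub S W₀ hW₀) (hbounded _)) (h𝒲diam W₀ (hS hW₀))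
  refine ⟨𝒱, ?_, ?_, ?_, ?_, ?_, ?_, ?_, ?_, ?_⟩
  -- finiteness
  · intro j; exact Finset.finite_toSet _
  -- openness
  · rintro j A hA
    obtain ⟨S, -, -, -, rfl⟩ := (h𝒱mem j A).mp hA
    exact isOpen_interior
  -- cover
  · apply Set.eq_univ_iff_forall.mpr
    intro x
    obtain ⟨S, hS, hne, hcard, hx⟩ := hcover x
    refine Set.mem_iUnion.mpr ⟨⟨S.card, by omega⟩, Set.mem_sUnion.mpr ⟨Vt S, ?_, hVVt S hx⟩⟩
    exact (h𝒱mem _ _).mpr ⟨S, hS, rfl, hne, rfl⟩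
  -- diameters
  · rintro j A hA
    obtain ⟨S, hS, hcard, hne, rfl⟩ := (h𝒱mem j A).mp hA
    calc Metric.diam (Vt S) ≤ Metric.diam (closure (V S)) :=
          Metric.diam_mono (hVtcl S) (hbounded _)
      _ ≤ ρ / 2 := hdiamV S hS hne
      _ < δ := by linarith
  -- condition (3)
  · rintro j A hA
    obtain ⟨S, hS, hcard, hne, rfl⟩ := (h𝒱mem j A).mp hA
    rcases Set.eq_empty_or_nonempty (Vt S) with hemp | hnemp
    · have : {U | U ∈ 𝒰 ∧ (U ∩ Vt S).Nonempty ∧ ¬ Vt S ⊆ U} = ∅ := by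
        rw [hemp]; ext U; simp
      rw [this]
      simp
    · have hVne : (V S).Nonempty :=
        closure_nonempty_iff.mp (hnemp.mono (hVtcl S))
      obtain ⟨z, hz⟩ := hVne
      obtain ⟨x₀, hx₀t, hzb⟩ := Set.mem_iUnion₂.mp (ht (Set.mem_univ z))
      have hsubball : Vt S ⊆ Metric.ball x₀ (ε x₀) := by
        intro y hy
        have hy' : y ∈ closure (V S) := hVtcl S hy
        have hd : dist y z ≤ Metric.diam (closure (V S)) :=
          Metric.dist_le_diam_of_mem (hbounded _) hy' (subset_closure hz)
        have hd2 := hdiamV S hS hne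
        have hzb' : dist z x₀ < ε x₀ / 2 := Metric.mem_ball.mp hzb
        have hρx : ρ ≤ ε x₀ := hρε x₀ hx₀t
        have : dist y x₀ ≤ dist y z + dist z x₀ := dist_triangle y z x₀
        rw [Metric.mem_ball]
        linarith
      exact le_trans (hgood x₀ (Vt S) hsubball) (Nat.le_mul_of_pos_right k hFpos)
  -- condition (4)
  · rintro j A hA
    obtain ⟨S, hS, hcard, hne, rfl⟩ := (h𝒱mem j A).mp hA
    have hjpos : 1 ≤ (j : ℕ) := by
      rw [← hcard]
      exact Finset.card_pos.mpr hne
    have hsub : {B | (∃ i, i ≤ j ∧ B ∈ 𝒱 i) ∧ (Vt S ∩ B).Nonempty} ⊆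
        ↑(Finset.image Vt (S.powerset.filter (fun S' => S' ≠ ∅))) := by
      rintro B ⟨⟨i, hij, hB⟩, hint⟩
      obtain ⟨S', hS', hcard', hne', rfl⟩ := (h𝒱mem i B).mp hB
      have hclne : (closure (V S) ∩ closure (V S')).Nonempty :=
        hint.mono (Set.inter_subset_inter (hVtcl S) (hVtcl S'))
      have hcc : S'.card ≤ S.card := by
        rw [hcard, hcard']
        exact hij
      have hsub' : S' ⊆ S := hsubkey S S' hS hS' hcc hclne
      exact Finset.mem_coe.mpr (Finset.mem_image_of_mem _
        (Finset.mem_filter.mpr ⟨Finset.mem_powerset.mpr hsub', hne'.ne_empty⟩))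
    calc {B | (∃ i, i ≤ j ∧ B ∈ 𝒱 i) ∧ (Vt S ∩ B).Nonempty}.ncard
        ≤ (↑(Finset.image Vt (S.powerset.filter (fun S' => S' ≠ ∅))) : Set (Set Z)).ncard :=
          Set.ncard_le_ncard hsub (Finset.finite_toSet _)
      _ = (Finset.image Vt (S.powerset.filter (fun S' => S' ≠ ∅))).card :=
          Set.ncard_coe_finset _
      _ ≤ (S.powerset.filter (fun S' => S' ≠ ∅)).card := Finset.card_image_le
      _ = S.powerset.card - 1 := by
          rw [Finset.filter_ne', Finset.card_erase_of_mem (Finset.empty_mem_powerset S)]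
      _ = 2 ^ (j : ℕ) - 1 := by rw [Finset.card_powerset, hcard]
      _ ≤ 2 ^ ((j : ℕ) + 1) - 2 := by
          have h1 : 2 ^ ((j : ℕ) + 1) = 2 ^ (j : ℕ) * 2 := pow_succ 2 _
          have h2 : 1 ≤ 2 ^ (j : ℕ) := Nat.one_le_two_pow
          omega
  -- condition (5)
  · rintro j A hA B hB
    obtain ⟨S, hS, hcard, hne, rfl⟩ := (h𝒱mem j A).mp hA
    obtain ⟨S', hS', hcard', hne', rfl⟩ := (h𝒱mem j B).mp hB
    by_cases hSS : S = S'
    · left; rw [hSS]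
    · right
      apply Set.eq_empty_iff_forall_notMem.mpr
      rintro x ⟨hx1, hx2⟩
      have hx1' : x ∈ closure (V S) := by
        have := closure_mono (hVtcl S)
        rw [closure_closure] at this
        exact this hx1
      have hx2' : x ∈ closure (V S') := by
        have := closure_mono (hVtcl S')
        rw [closure_closure] at this
        exact this hx2
      have hcc : S'.card ≤ S.card := by rw [hcard, hcard']
      have h1 : S' ⊆ S := hsubkey S S' hS hS' hcc ⟨x, hx1', hx2'⟩
      exact hSS (Finset.eq_of_subset_of_card_le h1 (le_of_eq (hcard.trans hcard'.symm))).symm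
  -- invariance
  · rintro j g A hA
    obtain ⟨S, hS, hcard, hne, rfl⟩ := (h𝒱mem j A).mp hA
    rw [hVteq g S hS]
    refine (h𝒱mem j _).mpr ⟨S.image (g • ·), ?_, ?_, hne.image _, rfl⟩
    · intro W hW
      obtain ⟨W₀, hW₀, rfl⟩ := Finset.mem_image.mp hW
      exact h𝒲inv g W₀ (hS hW₀)
    · rw [Finset.card_image_of_injective _ (MulAction.injective g), hcard]
  -- regular open
  · rintro j A hA
    obtain ⟨S, -, -, -, rfl⟩ := (h𝒱mem j A).mp hA
    exact (regular_open_idem (V S)).symm
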